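/- Let (gᵗ) be generated by the greedy Sinkhorn iteration. Then for every t ≥ 1, every i ∈ {1,…,K} and every x_i ∈ 𝒳_i, −(L − 1) + η log(min_{j∈{1,…,K}, y∈𝒳ⱼ} μⱼ(y)) − ηL log(K C* n) ≤ gᵗ_i(x_i) ≤ 1. -/
import Mathlib


open scoped ENNReal BigOperators

noncomputable section

/-- `S_K^L`: the nonempty subsets of `{1,…,K}` of size at most `L`. -/
def SKL (K L : ℕ) : Finset (Finset (Fin K)) :=
  Finset.univ.filter fun A => A.Nonempty ∧ A.card ≤ L

/-- `S_K^L(i)`: the members of `S_K^L` containing `i`. -/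
def SKLi (K L : ℕ) (i : Fin K) : Finset (Finset (Fin K)) :=
  (SKL K L).filter fun A => i ∈ A

variable {K : ℕ} (𝒳 : Fin K → Type*) [∀ i, Fintype (𝒳 i)] [∀ i, DecidableEq (𝒳 i)]

/-- The `i`-th marginal `Pᵢ#π_A` of a coupling `π_A` on `𝒳^A`
(zero when `i ∉ A`). -/
def marg (A : Finset (Fin K)) (π : ((j : A) → 𝒳 j.1) → ℝ) (i : Fin K) (xi : 𝒳 i) : ℝ :=
  if hi : i ∈ A then
    ∑ x : (j : A) → 𝒳 j.1, (if x ⟨i, hi⟩ = xi then π x else 0)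
  else 0

/-- `Σ_{A ∈ S_K^L(i)} Pᵢ#π_A`, evaluated at `xi`. -/
def totMarg (L : ℕ) (π : (A : Finset (Fin K)) → ((j : A) → 𝒳 j.1) → ℝ)
    (i : Fin K) (xi : 𝒳 i) : ℝ :=
  ∑ A ∈ SKLi K L i, marg 𝒳 A (π A) i xi

/-- The couplings `π_A(g)` induced by potentials `g`, interpreted as `0` where the
cost is `+∞`. -/
def piInd (η : ℝ) (c : (A : Finset (Fin K)) → ((j : A) → 𝒳 j.1) → ℝ≥0∞)
    (g : (i : Fin K) → 𝒳 i → ℝ) (A : Finset (Fin K)) (x : (j : A) → 𝒳 j.1) : ℝ :=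
  if c A x = ⊤ then 0
  else Real.exp ((∑ j : A, g j.1 (x j) - (1 + (c A x).toReal)) / η)

/-- The dual objective `𝒢^L`. -/
def dualObj (η : ℝ) (L : ℕ) (c : (A : Finset (Fin K)) → ((j : A) → 𝒳 j.1) → ℝ≥0∞)
    (μ : (i : Fin K) → 𝒳 i → ℝ) (g : (i : Fin K) → 𝒳 i → ℝ) : ℝ :=
  (∑ A ∈ SKL K L, ∑ x : (j : A) → 𝒳 j.1, piInd 𝒳 η c g A x)
    - (1 / η) * ∑ i : Fin K, ∑ xi : 𝒳 i, g i xi * μ i xi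

/-- Unnormalized Kullback–Leibler divergence (convention `0 · log 0 = 0`). -/
def KLdiv {Z : Type*} [Fintype Z] (α β : Z → ℝ) : ℝ :=
  (∑ z, (β z - α z)) + ∑ z, α z * Real.log (α z / β z)

/-- ℓ¹ norm of a vector on a finite set. -/
def l1 {Z : Type*} [Fintype Z] (v : Z → ℝ) : ℝ := ∑ z, |v z|

/-- `g : ℕ → potentials` is generated by the greedy Sinkhorn iteration: `g⁰ = 0`,
and at each step a coordinate `I` maximizing the KL-discrepancy of the `I`-th
marginal is updated by the Sinkhorn formula, all others kept fixed. -/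
def IsGreedySinkhorn (η : ℝ) (L : ℕ)
    (c : (A : Finset (Fin K)) → ((j : A) → 𝒳 j.1) → ℝ≥0∞)
    (μ : (i : Fin K) → 𝒳 i → ℝ) (g : ℕ → (i : Fin K) → 𝒳 i → ℝ) : Prop :=
  (∀ i xi, g 0 i xi = 0) ∧
  ∀ t : ℕ, ∃ I : Fin K,
    (∀ i : Fin K,
      KLdiv (μ i) (totMarg 𝒳 L (piInd 𝒳 η c (g t)) i) ≤
        KLdiv (μ I) (totMarg 𝒳 L (piInd 𝒳 η c (g t)) I)) ∧
    (∀ xI : 𝒳 I, g (t + 1) I xI =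
      g t I xI + η * Real.log (μ I xI)
        - η * Real.log (totMarg 𝒳 L (piInd 𝒳 η c (g t)) I xI)) ∧
    (∀ i : Fin K, i ≠ I → g (t + 1) i = g t i)

/-- The marginal error `E_t` of the greedy Sinkhorn iteration. -/
def Err (η : ℝ) (L : ℕ) (c : (A : Finset (Fin K)) → ((j : A) → 𝒳 j.1) → ℝ≥0∞)
    (μ : (i : Fin K) → 𝒳 i → ℝ) (g : ℕ → (i : Fin K) → 𝒳 i → ℝ) (t : ℕ) : ℝ :=
  ∑ i : Fin K,
    l1 (fun xi : 𝒳 i => μ i xi - totMarg 𝒳 L (piInd 𝒳 η c (g t)) i xi)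

/-- `C* := maxᵢ nᵢ / n`. -/
def Cstar (n : ℝ) : ℝ := ((Finset.univ.sup fun i : Fin K => Fintype.card (𝒳 i) : ℕ) : ℝ) / n

/-- `min_{j, y} μ_j(y)`. -/
def muMin (μ : (i : Fin K) → 𝒳 i → ℝ) : ℝ :=
  sInf {v : ℝ | ∃ (j : Fin K) (y : 𝒳 j), v = μ j y}

/-- `R̄ := L − η log min_{j,y} μ_j(y) + η L log(K C* n)`. -/
def Rbar (η : ℝ) (L : ℕ) (n : ℝ) (μ : (i : Fin K) → 𝒳 i → ℝ) : ℝ :=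
  (L : ℝ) - η * Real.log (muMin 𝒳 μ) + η * L * Real.log (K * Cstar 𝒳 n * n)


lemma aux_card_SKLi (K L : ℕ) (I : Fin K) : (SKLi K L I).card ≤ K ^ L := by
  classical
  set f : Finset (Fin K) → (Fin L → Fin K) := fun A k =>
    if h : (k : ℕ) < A.card then ((A.orderIsoOfFin rfl) ⟨k, h⟩ : Fin K) else I with hf
  have hrec : ∀ A ∈ SKLi K L I, Finset.univ.image (f A) = A := by
    intro A hA
    simp only [SKLi, SKL, Finset.mem_filter, Finset.mem_univ, true_and] at hA
    obtain ⟨⟨hne, hcard⟩, hIA⟩ := hA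
    apply Finset.Subset.antisymm
    · intro b hb
      simp only [Finset.mem_image, Finset.mem_univ, true_and] at hb
      obtain ⟨k, hk⟩ := hb
      subst hk
      simp only [hf]
      split
      · exact ((A.orderIsoOfFin rfl) ⟨k, ‹_›⟩).2
      · exact hIA
    · intro a ha
      obtain ⟨k0, hk0⟩ := (A.orderIsoOfFin rfl).surjective ⟨a, ha⟩
      have hk0L : (k0 : ℕ) < L := lt_of_lt_of_le k0.2 hcard
      simp only [Finset.mem_image, Finset.mem_univ, true_and]
      refine ⟨⟨k0, hk0L⟩, ?_⟩
      simp only [hf]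
      rw [dif_pos k0.2]
      have : (⟨(⟨(k0 : ℕ), hk0L⟩ : Fin L), k0.2⟩ : Fin A.card) = k0 := by
        apply Fin.ext; rfl
      rw [this, hk0]
  calc (SKLi K L I).card ≤ (Finset.univ : Finset (Fin L → Fin K)).card := by
        apply Finset.card_le_card_of_injOn f (fun _ _ => Finset.mem_univ _)
        intro A hA B hB hfAB
        rw [← hrec A hA, ← hrec B hB, hfAB]
    _ = K ^ L := by simp

lemma piInd_nonneg (η : ℝ) (c : (A : Finset (Fin K)) → ((j : A) → 𝒳 j.1) → ℝ≥0∞)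
    (g : (i : Fin K) → 𝒳 i → ℝ) (A : Finset (Fin K)) (x : (j : A) → 𝒳 j.1) :
    0 ≤ piInd 𝒳 η c g A x := by
  rw [piInd]; split
  · exact le_refl 0
  · exact (Real.exp_pos _).le

lemma marg_nonneg (A : Finset (Fin K)) (π : ((j : A) → 𝒳 j.1) → ℝ) (i : Fin K) (xi : 𝒳 i)
    (hπ : ∀ x, 0 ≤ π x) : 0 ≤ marg 𝒳 A π i xi := by
  rw [marg]; split
  · exact Finset.sum_nonneg fun x _ => by split <;> simp [hπ]
  · exact le_refl 0

lemma aux_T_lb (L : ℕ) (hL : 1 ≤ L) (η : ℝ) (hη : 0 < η)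
    (c : (A : Finset (Fin K)) → ((j : A) → 𝒳 j.1) → ℝ≥0∞)
    (hc : ∀ (i : Fin K) (x : (j : ({i} : Finset (Fin K))) → 𝒳 j.1), c {i} x = 0)
    (g0 : (i : Fin K) → 𝒳 i → ℝ) (I : Fin K) (xi : 𝒳 I) :
    Real.exp ((g0 I xi - 1) / η) ≤ totMarg 𝒳 L (piInd 𝒳 η c g0) I xi := by
  classical
  have hi : I ∈ ({I} : Finset (Fin K)) := Finset.mem_singleton_self I
  set x₀ : (j : ({I} : Finset (Fin K))) → 𝒳 j.1 := fun j =>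
    cast (congrArg 𝒳 (Finset.mem_singleton.mp j.2).symm) xi with hx₀
  have hx₀v : x₀ ⟨I, hi⟩ = xi := rfl
  have hmem : ({I} : Finset (Fin K)) ∈ SKLi K L I := by
    simp [SKLi, SKL, hL]
  have hsingle : marg 𝒳 {I} (piInd 𝒳 η c g0 {I}) I xi = Real.exp ((g0 I xi - 1) / η) := by
    rw [marg, dif_pos hi]
    rw [Fintype.sum_eq_single x₀ (fun b hb => ?_)]
    · rw [if_pos hx₀v]
      rw [piInd, if_neg (by rw [hc]; exact ENNReal.zero_ne_top)]
      rw [hc]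
      have hsum : ∑ j : ({I} : Finset (Fin K)), g0 j.1 (x₀ j) = g0 I xi := by
        rw [Fintype.sum_eq_single (⟨I, hi⟩ : ({I} : Finset (Fin K)))
          (fun b hb => absurd (Subtype.ext (Finset.mem_singleton.mp b.2)) hb)]
        rfl
      rw [hsum]
      norm_num
    · rw [if_neg]
      intro hbv
      apply hb
      funext j
      have hj : j = ⟨I, hi⟩ := Subtype.ext (Finset.mem_singleton.mp j.2)
      subst hj
      rw [hbv, hx₀v]
  rw [← hsingle]
  apply Finset.single_le_sum (f := fun A => marg 𝒳 A (piInd 𝒳 η c g0 A) I xi) ?_ hmem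
  intro A hA
  exact marg_nonneg 𝒳 A _ I xi (fun x => piInd_nonneg 𝒳 η c g0 A x)

lemma aux_T_ub [∀ i, Nonempty (𝒳 i)] (hK : 0 < K) (L : ℕ) (hL : 1 ≤ L) (η : ℝ) (hη : 0 < η)
    (c : (A : Finset (Fin K)) → ((j : A) → 𝒳 j.1) → ℝ≥0∞)
    (g0 : (i : Fin K) → 𝒳 i → ℝ) (hub : ∀ j y, g0 j y ≤ 1) (I : Fin K) (xi : 𝒳 I) :
    totMarg 𝒳 L (piInd 𝒳 η c g0) I xi ≤
      ((K : ℝ) * ((Finset.univ.sup fun i : Fin K => Fintype.card (𝒳 i) : ℕ) : ℝ)) ^ L *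
        Real.exp ((g0 I xi + ((L : ℝ) - 2)) / η) := by
  classical
  set N : ℕ := Finset.univ.sup fun i : Fin K => Fintype.card (𝒳 i) with hN
  set E : ℝ := Real.exp ((g0 I xi + ((L : ℝ) - 2)) / η) with hE
  have hN1 : 1 ≤ N := by
    have h1 : Fintype.card (𝒳 ⟨0, hK⟩) ≤ N :=
      Finset.le_sup (f := fun i : Fin K => Fintype.card (𝒳 i)) (Finset.mem_univ (⟨0, hK⟩ : Fin K))
    exact le_trans Fintype.card_pos h1
  have hstep : ∀ A ∈ SKLi K L I, marg 𝒳 A (piInd 𝒳 η c g0 A) I xi ≤ (N : ℝ) ^ L * E := by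
    intro A hA
    simp only [SKLi, SKL, Finset.mem_filter, Finset.mem_univ, true_and] at hA
    obtain ⟨⟨hne, hcard⟩, hIA⟩ := hA
    have hcard1 : 1 ≤ A.card := Finset.card_pos.mpr ⟨I, hIA⟩
    rw [marg, dif_pos hIA]
    have hterm : ∀ x : (j : A) → 𝒳 j.1,
        (if x ⟨I, hIA⟩ = xi then piInd 𝒳 η c g0 A x else 0) ≤ E := by
      intro x
      split_ifs with hx
      · rw [piInd]
        split
        · exact (Real.exp_pos _).le
        · apply Real.exp_le_exp.mpr
          gcongr
          have h2 : (0:ℝ) ≤ (c A x).toReal := ENNReal.toReal_nonneg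
          have h1 : ∑ j : A, g0 j.1 (x j) ≤ g0 I xi + ((L : ℝ) - 1) := by
            have hsplit := Finset.sum_erase_add Finset.univ
              (fun j : A => g0 j.1 (x j)) (Finset.mem_univ (⟨I, hIA⟩ : A))
            rw [← hsplit]
            have hxj : g0 (⟨I, hIA⟩ : A).1 (x ⟨I, hIA⟩) = g0 I xi := by rw [hx]
            have herase : ∑ j ∈ Finset.univ.erase (⟨I, hIA⟩ : A), g0 j.1 (x j)
                ≤ ((L : ℝ) - 1) := by
              have h3 := Finset.sum_le_card_nsmul (Finset.univ.erase (⟨I, hIA⟩ : A))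
                (fun j : A => g0 j.1 (x j)) 1 (fun j _ => hub j.1 (x j))
              have h4 : (Finset.univ.erase (⟨I, hIA⟩ : A)).card = A.card - 1 := by
                rw [Finset.card_erase_of_mem (Finset.mem_univ _), Finset.card_univ,
                  Fintype.card_coe]
              rw [h4] at h3
              have h5 : ((A.card - 1 : ℕ) : ℝ) ≤ (L : ℝ) - 1 := by
                rw [Nat.cast_sub hcard1]
                have : (A.card : ℝ) ≤ (L : ℝ) := Nat.cast_le.mpr hcard
                push_cast
                linarith
              calc ∑ j ∈ Finset.univ.erase (⟨I, hIA⟩ : A), g0 j.1 (x j)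
                  ≤ (A.card - 1 : ℕ) • (1:ℝ) := h3
                _ = ((A.card - 1 : ℕ) : ℝ) := by simp
                _ ≤ (L : ℝ) - 1 := h5
            simp only at hxj herase ⊢
            rw [hxj]
            linarith
          linarith
      · exact (Real.exp_pos _).le
    have hsum := Finset.sum_le_card_nsmul Finset.univ
      (fun x : (j : A) → 𝒳 j.1 => if x ⟨I, hIA⟩ = xi then piInd 𝒳 η c g0 A x else 0) E
      (fun x _ => hterm x)
    have hcardpi : Fintype.card ((j : A) → 𝒳 j.1) ≤ N ^ L := by
      rw [Fintype.card_pi]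
      calc ∏ j : A, Fintype.card (𝒳 j.1) ≤ ∏ _j : A, N :=
            Finset.prod_le_prod' (fun j _ => Finset.le_sup (f := fun i : Fin K => Fintype.card (𝒳 i)) (Finset.mem_univ j.1))
        _ = N ^ (Fintype.card A) := by rw [Finset.prod_const, Finset.card_univ]
        _ = N ^ A.card := by rw [Fintype.card_coe]
        _ ≤ N ^ L := Nat.pow_le_pow_right hN1 hcard
    calc ∑ x : (j : A) → 𝒳 j.1, (if x ⟨I, hIA⟩ = xi then piInd 𝒳 η c g0 A x else 0)
        ≤ Finset.univ.card • E := hsum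
      _ = (Fintype.card ((j : A) → 𝒳 j.1) : ℝ) * E := by
          rw [Finset.card_univ, nsmul_eq_mul]
      _ ≤ (N : ℝ) ^ L * E := by
          apply mul_le_mul_of_nonneg_right ?_ (Real.exp_pos _).le
          exact_mod_cast hcardpi
  have htot := Finset.sum_le_card_nsmul (SKLi K L I)
    (fun A => marg 𝒳 A (piInd 𝒳 η c g0 A) I xi) ((N : ℝ) ^ L * E) hstep
  calc totMarg 𝒳 L (piInd 𝒳 η c g0) I xi
      ≤ (SKLi K L I).card • ((N : ℝ) ^ L * E) := htot
    _ = ((SKLi K L I).card : ℝ) * ((N : ℝ) ^ L * E) := by rw [nsmul_eq_mul]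
    _ ≤ ((K : ℝ) ^ L) * ((N : ℝ) ^ L * E) := by
        apply mul_le_mul_of_nonneg_right ?_ (by positivity)
        exact_mod_cast aux_card_SKLi K L I
    _ = ((K : ℝ) * (N : ℝ)) ^ L * E := by ring

/-- along the greedy Sinkhorn iteration, for every `t ≥ 1`, every
`i` and every `x_i ∈ 𝒳 i`,
`−(L−1) + η log min_{j,y} μ_j(y) − η L log(K C* n) ≤ gᵗ_i(x_i) ≤ 1`. -/
theorem stmt13 (K L : ℕ) (hK : 0 < K) (hL : 1 ≤ L) (hLK : L ≤ K)
    (𝒳 : Fin K → Type*) [∀ i, Fintype (𝒳 i)] [∀ i, DecidableEq (𝒳 i)]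
    [∀ i, Nonempty (𝒳 i)]
    (η : ℝ) (hη : 0 < η) (n : ℝ) (hn : 0 < n)
    (c : (A : Finset (Fin K)) → ((j : A) → 𝒳 j.1) → ℝ≥0∞)
    (hc : ∀ (i : Fin K) (x : (j : ({i} : Finset (Fin K))) → 𝒳 j.1), c {i} x = 0)
    (μ : (i : Fin K) → 𝒳 i → ℝ) (hμpos : ∀ i xi, 0 < μ i xi)
    (hmass : ∑ i : Fin K, ∑ xi : 𝒳 i, μ i xi = 1)
    (g : ℕ → (i : Fin K) → 𝒳 i → ℝ)
    (hg : IsGreedySinkhorn 𝒳 η L c μ g) :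
    ∀ t : ℕ, 1 ≤ t → ∀ (i : Fin K) (xi : 𝒳 i),
      -((L : ℝ) - 1) + η * Real.log (muMin 𝒳 μ)
          - η * L * Real.log (K * Cstar 𝒳 n * n) ≤ g t i xi ∧
      g t i xi ≤ 1 := by
  classical
  obtain ⟨h0, hstep⟩ := hg
  set mn : ℝ := ((Finset.univ.sup fun i : Fin K => Fintype.card (𝒳 i) : ℕ) : ℝ) with hmn
  have hmn1 : (1 : ℝ) ≤ mn := by
    have h1 : Fintype.card (𝒳 ⟨0, hK⟩) ≤ Finset.univ.sup fun i : Fin K => Fintype.card (𝒳 i) :=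
      Finset.le_sup (f := fun i : Fin K => Fintype.card (𝒳 i)) (Finset.mem_univ (⟨0, hK⟩ : Fin K))
    have h2 : 1 ≤ Finset.univ.sup fun i : Fin K => Fintype.card (𝒳 i) :=
      le_trans Fintype.card_pos h1
    rw [hmn]; exact_mod_cast h2
  have hKmn : (1 : ℝ) ≤ (K : ℝ) * mn := by
    have hK1 : (1 : ℝ) ≤ (K : ℝ) := by exact_mod_cast hK
    nlinarith
  have hrw : Real.log ((K : ℝ) * Cstar 𝒳 n * n) = Real.log ((K : ℝ) * mn) := by
    congr 1
    rw [Cstar, ← hmn]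
    field_simp
  -- muMin facts
  have hfin : ({v : ℝ | ∃ (j : Fin K) (y : 𝒳 j), v = μ j y}).Finite := by
    have : {v : ℝ | ∃ (j : Fin K) (y : 𝒳 j), v = μ j y}
        = Set.range (fun p : (Σ j : Fin K, 𝒳 j) => μ p.1 p.2) := by
      ext v
      constructor
      · rintro ⟨j, y, rfl⟩; exact ⟨⟨j, y⟩, rfl⟩
      · rintro ⟨⟨j, y⟩, rfl⟩; exact ⟨j, y, rfl⟩
    rw [this]
    exact Set.finite_range _
  have hSne : ({v : ℝ | ∃ (j : Fin K) (y : 𝒳 j), v = μ j y}).Nonempty :=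
    ⟨μ ⟨0, hK⟩ (Classical.arbitrary _), ⟨_, _, rfl⟩⟩
  have hmem : muMin 𝒳 μ ∈ {v : ℝ | ∃ (j : Fin K) (y : 𝒳 j), v = μ j y} :=
    hSne.csInf_mem hfin
  have hmin_pos : 0 < muMin 𝒳 μ := by
    obtain ⟨j, y, hv⟩ := hmem
    rw [hv]; exact hμpos j y
  have hmin_le : ∀ (j : Fin K) (y : 𝒳 j), muMin 𝒳 μ ≤ μ j y :=
    fun j y => csInf_le hfin.bddBelow ⟨j, y, rfl⟩
  have hμle1 : ∀ (j : Fin K) (y : 𝒳 j), μ j y ≤ 1 := by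
    intro j y
    have h1 : μ j y ≤ ∑ xi : 𝒳 j, μ j xi :=
      Finset.single_le_sum (fun z _ => (hμpos j z).le) (Finset.mem_univ y)
    have h2 : ∑ xi : 𝒳 j, μ j xi ≤ ∑ i : Fin K, ∑ xi : 𝒳 i, μ i xi :=
      Finset.single_le_sum (f := fun i => ∑ xi : 𝒳 i, μ i xi)
        (fun i _ => Finset.sum_nonneg fun z _ => (hμpos i z).le) (Finset.mem_univ j)
    rw [hmass] at h2
    linarith
  have hmin_le1 : muMin 𝒳 μ ≤ 1 := le_trans (hmin_le ⟨0, hK⟩ (Classical.arbitrary _)) (hμle1 _ _)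
  have hlogmin : Real.log (muMin 𝒳 μ) ≤ 0 := Real.log_nonpos hmin_pos.le hmin_le1
  have hlogKmn : 0 ≤ Real.log ((K : ℝ) * mn) := Real.log_nonneg hKmn
  set LB : ℝ := -((L : ℝ) - 1) + η * Real.log (muMin 𝒳 μ)
      - η * L * Real.log ((K : ℝ) * Cstar 𝒳 n * n) with hLBdef
  have hLB0 : LB ≤ 0 := by
    rw [hLBdef, hrw]
    have h1 : η * Real.log (muMin 𝒳 μ) ≤ 0 := by nlinarith
    have h2 : 0 ≤ η * (L : ℝ) * Real.log ((K : ℝ) * mn) := by positivity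
    have h3 : (1 : ℝ) ≤ (L : ℝ) := by exact_mod_cast hL
    linarith
  have main : ∀ t : ℕ, ∀ (i : Fin K) (xi : 𝒳 i), LB ≤ g t i xi ∧ g t i xi ≤ 1 := by
    intro t
    induction t with
    | zero => intro i xi; rw [h0]; exact ⟨hLB0, zero_le_one⟩
    | succ t ih =>
      obtain ⟨I, _, hupd, hfix⟩ := hstep t
      have hub : ∀ (j : Fin K) (y : 𝒳 j), g t j y ≤ 1 := fun j y => (ih j y).2
      intro i xi
      by_cases hi : i = I
      · subst hi
        have hTlb := aux_T_lb 𝒳 L hL η hη c hc (g t) i xi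
        have hTub := aux_T_ub 𝒳 hK L hL η hη c (g t) hub i xi
        rw [← hmn] at hTub
        set T := totMarg 𝒳 L (piInd 𝒳 η c (g t)) i xi with hT
        have hT0 : 0 < T := lt_of_lt_of_le (Real.exp_pos _) hTlb
        have hloglb : (g t i xi - 1) / η ≤ Real.log T := by
          have h := Real.log_le_log (Real.exp_pos _) hTlb
          rwa [Real.log_exp] at h
        have hlogub : Real.log T ≤
            (L : ℝ) * Real.log ((K : ℝ) * mn) + (g t i xi + ((L : ℝ) - 2)) / η := by
          have h := Real.log_le_log hT0 hTub
          rwa [Real.log_mul (by positivity) (Real.exp_ne_zero _), Real.log_pow,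
            Real.log_exp] at h
        rw [hupd xi]
        have hcancel1 : η * ((g t i xi - 1) / η) = g t i xi - 1 :=
          mul_div_cancel₀ _ hη.ne'
        have hcancel2 : η * ((g t i xi + ((L : ℝ) - 2)) / η) = g t i xi + ((L : ℝ) - 2) :=
          mul_div_cancel₀ _ hη.ne'
        have hmul1 : g t i xi - 1 ≤ η * Real.log T := by
          have := mul_le_mul_of_nonneg_left hloglb hη.le
          rwa [hcancel1] at this
        have hmul2 : η * Real.log T ≤
            η * (L : ℝ) * Real.log ((K : ℝ) * mn) + (g t i xi + ((L : ℝ) - 2)) := by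
          have h := mul_le_mul_of_nonneg_left hlogub hη.le
          rw [mul_add, hcancel2, ← mul_assoc] at h
          exact h
        constructor
        · rw [hLBdef, hrw]
          have hμ : η * Real.log (muMin 𝒳 μ) ≤ η * Real.log (μ i xi) :=
            mul_le_mul_of_nonneg_left (Real.log_le_log hmin_pos (hmin_le i xi)) hη.le
          linarith
        · have hμ1 : η * Real.log (μ i xi) ≤ 0 := by
            have := Real.log_nonpos (hμpos i xi).le (hμle1 i xi)
            nlinarith
          linarith
      · rw [hfix i hi]
        exact ih i xi
  intro t _ i xi
  exact main t i xi

end
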